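/- arXiv:1712.02981 — 4 statements merged into one kernel-verified Lean document; each statement's English description precedes it below -/
import Mathlib

section
/- (Uncertainty Principle) Let H ∈ 𝓗 with ‖H‖ = 1 admit the two expansions H = Σ_{k≥1} α_k φ_k and H = Σ_{l≥1} β_l ψ_l, where the coefficient sequences α and β are absolutely summable. Then for every fixed threshold ε > 0, the mutual coherence μ is strictly positive and (√(‖α‖_{0(ε)}) + ε)² + (√(‖β‖_{0(ε)}) + ε)² ≥ 2/μ. -/
set_option maxHeartbeats 4000000

/-- `N_ε(α) = min {K : ∑_{k ≥ K} |α_k| ≤ ε}` (indices shifted to start at `0`). -/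
noncomputable def Neps (α : ℕ → ℝ) (ε : ℝ) : ℕ :=
  sInf {K : ℕ | ∑' k : ℕ, |α (k + K)| ≤ ε}

open Classical in
/-- The ε-0 norm `‖α‖_{0(ε)}`: the number of nonzero entries of `α` with index `< N_ε(α)`. -/
noncomputable def epsZeroNorm (α : ℕ → ℝ) (ε : ℝ) : ℕ :=
  ((Finset.range (Neps α ε)).filter fun k => α k ≠ 0).card

/-- The ℓ¹ norm is at most `√‖α‖₀ε + ε` when the finite-window square sums of `α` are `≤ 1`. -/
lemma l1_le_sqrt_epsZeroNorm_add (α : ℕ → ℝ) (hα : Summable fun k => |α k|)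
    (hsq : ∀ s : Finset ℕ, ∑ k ∈ s, (α k) ^ 2 ≤ 1) (ε : ℝ) (hε : 0 < ε) :
    ∑' k, |α k| ≤ Real.sqrt (epsZeroNorm α ε) + ε := by
  classical
  have hne : {K : ℕ | ∑' k : ℕ, |α (k + K)| ≤ ε}.Nonempty := by
    have := tendsto_sum_nat_add (fun k => |α k|)
    obtain ⟨K, hK⟩ := (this.eventually_le_const hε).exists
    exact ⟨K, hK⟩
  have hN : ∑' k : ℕ, |α (k + Neps α ε)| ≤ ε := Nat.sInf_mem hne
  set N := Neps α ε with hNdef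
  have hsplit : ∑' k, |α k| = (∑ k ∈ Finset.range N, |α k|) + ∑' k, |α (k + N)| :=
    (hα.sum_add_tsum_nat_add N).symm
  set Γ : Finset ℕ := (Finset.range N).filter fun k => α k ≠ 0 with hΓ
  have hhead : ∑ k ∈ Finset.range N, |α k| = ∑ k ∈ Γ, |α k| := by
    rw [hΓ, Finset.sum_filter_of_ne]
    intro k _ h
    intro h0; exact h (by simpa [abs_eq_zero] using h0)
  have hcs : (∑ k ∈ Γ, |α k|) ^ 2 ≤ (Γ.card : ℝ) * ∑ k ∈ Γ, (α k) ^ 2 := by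
    have := Finset.sum_mul_sq_le_sq_mul_sq Γ (fun _ => (1 : ℝ)) (fun k => |α k|)
    simpa [sq_abs] using this
  have hΓsq : ∑ k ∈ Γ, (α k) ^ 2 ≤ 1 := hsq Γ
  have hheadle : ∑ k ∈ Γ, |α k| ≤ Real.sqrt (Γ.card : ℝ) := by
    rw [show Real.sqrt (Γ.card : ℝ) = Real.sqrt (Γ.card : ℝ) * 1 by ring]
    have h1 : (∑ k ∈ Γ, |α k|) ^ 2 ≤ (Γ.card : ℝ) * 1 := by
      refine hcs.trans ?_
      exact mul_le_mul_of_nonneg_left hΓsq (Nat.cast_nonneg _)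
    have h2 : (0 : ℝ) ≤ ∑ k ∈ Γ, |α k| := Finset.sum_nonneg fun _ _ => abs_nonneg _
    calc ∑ k ∈ Γ, |α k| = Real.sqrt ((∑ k ∈ Γ, |α k|) ^ 2) := (Real.sqrt_sq h2).symm
      _ ≤ Real.sqrt ((Γ.card : ℝ) * 1) := Real.sqrt_le_sqrt h1
      _ = Real.sqrt (Γ.card : ℝ) * 1 := by rw [mul_one, mul_one]
  have : (epsZeroNorm α ε : ℝ) = (Γ.card : ℝ) := by rw [epsZeroNorm]
  rw [hsplit, hhead, this]
  exact add_le_add hheadle hN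

/-- Coefficients of an expansion in a Hilbert basis are the inner products. -/
lemma coeff_eq_inner {H : Type*} [NormedAddCommGroup H] [InnerProductSpace ℝ H]
    [CompleteSpace H] (φ : HilbertBasis ℕ ℝ H) (x : H) (α : ℕ → ℝ)
    (hrep : HasSum (fun k => α k • (φ k : H)) x) (k : ℕ) :
    α k = (inner ℝ (φ k) x : ℝ) := by
  have h1 : HasSum (fun j => (inner ℝ (φ k) (α j • (φ j : H)) : ℝ)) (inner ℝ (φ k) x) :=
    hrep.mapL (innerSL ℝ (φ k : H))
  have h2 : HasSum (fun j => if j = k then α k else 0) (α k) := hasSum_ite_eq k (α k)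
  have heq : (fun j => (inner ℝ (φ k) (α j • (φ j : H)) : ℝ)) =
      fun j => if j = k then α k else 0 := by
    funext j
    rw [real_inner_smul_right]
    have hij : (inner ℝ (φ k : H) (φ j : H) : ℝ) = if k = j then 1 else 0 :=
      orthonormal_iff_ite.mp φ.orthonormal k j
    rcases eq_or_ne j k with h | h
    · subst h; simp [hij, φ.orthonormal.1 j]
    · simp [hij, h, Ne.symm h]
  rw [heq] at h1
  exact (h1.unique h2).symm

/-- **Uncertainty principle** for pairs of orthonormal bases of a separable Hilbert space:
if `‖H‖ = 1`, `H = ∑ α_k φ_k = ∑ β_l ψ_l` with absolutely summable coefficients, then the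
mutual coherence `μ = sup_{k,l} |⟨φ_k, ψ_l⟩|` is positive and
`(√‖α‖₀ε + ε)² + (√‖β‖₀ε + ε)² ≥ 2/μ`. -/
theorem uncertainty_principle_pairs_of_bases
    {H : Type*} [NormedAddCommGroup H] [InnerProductSpace ℝ H] [CompleteSpace H]
    (φ ψ : HilbertBasis ℕ ℝ H) (x : H) (hx : ‖x‖ = 1)
    (α β : ℕ → ℝ)
    (hα : Summable fun k => |α k|) (hβ : Summable fun l => |β l|)
    (hrepα : HasSum (fun k => α k • (φ k : H)) x)
    (hrepβ : HasSum (fun l => β l • (ψ l : H)) x)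
    (ε : ℝ) (hε : 0 < ε) :
    0 < (⨆ p : ℕ × ℕ, |(inner ℝ (φ p.1) (ψ p.2) : ℝ)|) ∧
      2 / (⨆ p : ℕ × ℕ, |(inner ℝ (φ p.1) (ψ p.2) : ℝ)|) ≤
        (Real.sqrt (epsZeroNorm α ε) + ε) ^ 2 + (Real.sqrt (epsZeroNorm β ε) + ε) ^ 2 := by
  classical
  have hαinner : ∀ k, α k = (inner ℝ (φ k) x : ℝ) := coeff_eq_inner φ x α hrepα
  have hβinner : ∀ l, β l = (inner ℝ (ψ l) x : ℝ) := coeff_eq_inner ψ x β hrepβ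
  -- Parseval
  have hxx : (inner ℝ x x : ℝ) = 1 := by
    rw [real_inner_self_eq_norm_sq, hx]; norm_num
  have hParα : HasSum (fun k => (α k) ^ 2) 1 := by
    have := φ.hasSum_inner_mul_inner x x
    rw [hxx] at this
    have e : (fun k => (α k) ^ 2) = fun k => inner ℝ x (φ k) * inner ℝ (φ k) x := by
      funext k
      rw [hαinner k, real_inner_comm x (φ k : H)]; ring
    rw [e]; exact this
  have hParβ : HasSum (fun l => (β l) ^ 2) 1 := by
    have := ψ.hasSum_inner_mul_inner x x
    rw [hxx] at this
    have e : (fun l => (β l) ^ 2) = fun l => inner ℝ x (ψ l) * inner ℝ (ψ l) x := by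
      funext l
      rw [hβinner l, real_inner_comm x (ψ l : H)]; ring
    rw [e]; exact this
  have hsqα : ∀ s : Finset ℕ, ∑ k ∈ s, (α k) ^ 2 ≤ 1 :=
    fun s => sum_le_hasSum s (fun k _ => sq_nonneg _) hParα
  have hsqβ : ∀ s : Finset ℕ, ∑ l ∈ s, (β l) ^ 2 ≤ 1 :=
    fun s => sum_le_hasSum s (fun l _ => sq_nonneg _) hParβ
  set μ : ℝ := ⨆ p : ℕ × ℕ, |(inner ℝ (φ p.1) (ψ p.2) : ℝ)| with hμdef
  -- boundedness of the family of inner products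
  have hbdd : BddAbove (Set.range fun p : ℕ × ℕ => |(inner ℝ (φ p.1) (ψ p.2) : ℝ)|) := by
    refine ⟨1, ?_⟩
    rintro _ ⟨p, rfl⟩
    calc |(inner ℝ (φ p.1) (ψ p.2) : ℝ)| ≤ ‖(φ p.1 : H)‖ * ‖(ψ p.2 : H)‖ :=
          abs_real_inner_le_norm _ _
      _ = 1 := by rw [φ.orthonormal.1, ψ.orthonormal.1, mul_one]
  have hμ_ge : ∀ p : ℕ × ℕ, |(inner ℝ (φ p.1) (ψ p.2) : ℝ)| ≤ μ := fun p => le_ciSup hbdd p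
  have hμ_nonneg : 0 ≤ μ := le_trans (abs_nonneg _) (hμ_ge (0, 0))
  set A : ℝ := ∑' k, |α k| with hA
  set B : ℝ := ∑' l, |β l| with hB
  have hA0 : 0 ≤ A := tsum_nonneg fun _ => abs_nonneg _
  have hB0 : 0 ≤ B := tsum_nonneg fun _ => abs_nonneg _
  -- |α k| ≤ μ * B
  have hαbound : ∀ k, |α k| ≤ μ * B := by
    intro k
    have h1 : HasSum (fun l => (inner ℝ (φ k) (β l • (ψ l : H)) : ℝ)) (inner ℝ (φ k) x) :=
      hrepβ.mapL (innerSL ℝ (φ k : H))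
    have h1' : HasSum (fun l => β l * (inner ℝ (φ k) (ψ l : H) : ℝ)) (α k) := by
      rw [hαinner k]
      convert h1 using 2 with l
      rw [real_inner_smul_right]
    have hsummul : Summable fun l => |β l| * μ := hβ.mul_right μ
    have habs : |α k| ≤ ∑' l, |β l| * μ := by
      have hterm : ∀ l, |β l * (inner ℝ (φ k) (ψ l : H) : ℝ)| ≤ |β l| * μ := by
        intro l
        rw [abs_mul]
        exact mul_le_mul_of_nonneg_left (hμ_ge (k, l)) (abs_nonneg _)
      calc |α k| = |∑' l, β l * (inner ℝ (φ k) (ψ l : H) : ℝ)| := by rw [h1'.tsum_eq]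
        _ ≤ ∑' l, |β l * (inner ℝ (φ k) (ψ l : H) : ℝ)| := by
            have hsabs : Summable fun l => |β l * (inner ℝ (φ k) (ψ l : H) : ℝ)| :=
              hsummul.of_nonneg_of_le (fun l => abs_nonneg _) hterm
            have hn := norm_tsum_le_tsum_norm
              (f := fun l => β l * (inner ℝ (φ k) (ψ l : H) : ℝ))
              (by simpa only [Real.norm_eq_abs] using hsabs)
            simpa only [Real.norm_eq_abs] using hn
        _ ≤ ∑' l, |β l| * μ := by
            refine Summable.tsum_le_tsum hterm ?_ hsummul
            exact (hsummul.of_nonneg_of_le (fun l => abs_nonneg _) hterm)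
    calc |α k| ≤ ∑' l, |β l| * μ := habs
      _ = B * μ := tsum_mul_right
      _ = μ * B := mul_comm _ _
  -- 1 ≤ μ * A * B
  have hkey : 1 ≤ μ * A * B := by
    have h1 : (1 : ℝ) = ∑' k, (α k) ^ 2 := hParα.tsum_eq.symm
    have h2 : ∑' k, (α k) ^ 2 ≤ ∑' k, |α k| * (μ * B) := by
      refine Summable.tsum_le_tsum ?_ hParα.summable (hα.mul_right _)
      intro k
      calc (α k) ^ 2 = |α k| * |α k| := by rw [abs_mul_abs_self, sq]
        _ ≤ |α k| * (μ * B) := mul_le_mul_of_nonneg_left (hαbound k) (abs_nonneg _)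
    have h3 : ∑' k, |α k| * (μ * B) = A * (μ * B) := tsum_mul_right
    nlinarith [h1, h2, h3]
  have hμpos : 0 < μ := by
    rcases lt_or_eq_of_le hμ_nonneg with h | h
    · exact h
    · exfalso; rw [← h] at hkey; nlinarith
  refine ⟨hμpos, ?_⟩
  have hAle : A ≤ Real.sqrt (epsZeroNorm α ε) + ε :=
    l1_le_sqrt_epsZeroNorm_add α hα hsqα ε hε
  have hBle : B ≤ Real.sqrt (epsZeroNorm β ε) + ε :=
    l1_le_sqrt_epsZeroNorm_add β hβ hsqβ ε hε
  set a := Real.sqrt (epsZeroNorm α ε) + ε with ha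
  set b := Real.sqrt (epsZeroNorm β ε) + ε with hb
  have ha0 : 0 ≤ a := add_nonneg (Real.sqrt_nonneg _) hε.le
  have hb0 : 0 ≤ b := add_nonneg (Real.sqrt_nonneg _) hε.le
  rw [div_le_iff₀ hμpos]
  nlinarith [sq_nonneg (a - b), mul_le_mul hAle hBle hB0 ha0,
    mul_le_mul_of_nonneg_left (mul_le_mul hAle hBle hB0 ha0) hμ_nonneg]
end

section
/- Let H ∈ 𝓗 with ‖H‖ = 1 admit the two expansions H = Σ_{k≥1} α_k φ_k and H = Σ_{l≥1} β_l ψ_l, where the coefficient sequences α and β are absolutely summable. Then for every fixed threshold ε > 0, 1 ≤ μ · (Σ_{k ∈ Γ_ε(α)} |α_k| + ε) · (Σ_{l ∈ Γ_ε(β)} |β_l| + ε). -/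
open Classical in
/-- The ε-support `Γ_ε(α)`: indices `k < N_ε(α)` with `α_k ≠ 0`, as a finite set. -/
noncomputable def epsSupport (α : ℕ → ℝ) (ε : ℝ) : Finset ℕ :=
  (Finset.range (Neps α ε)).filter fun k => α k ≠ 0

lemma tsum_abs_le_epsSupport (α : ℕ → ℝ) (hα : Summable fun k => |α k|)
    {ε : ℝ} (hε : 0 < ε) :
    ∑' k, |α k| ≤ (∑ k ∈ epsSupport α ε, |α k|) + ε := by
  have hne : {K : ℕ | ∑' k : ℕ, |α (k + K)| ≤ ε}.Nonempty := by
    have h := tendsto_sum_nat_add (fun k => |α k|)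
    obtain ⟨i, hi⟩ := (h.eventually (gt_mem_nhds hε)).exists
    exact ⟨i, hi.le⟩
  have hN : (∑' k : ℕ, |α (k + Neps α ε)|) ≤ ε := Nat.sInf_mem hne
  have hsplit := (Summable.sum_add_tsum_nat_add (f := fun k => |α k|) (Neps α ε) hα).symm
  have hfilter : ∑ k ∈ epsSupport α ε, |α k| = ∑ k ∈ Finset.range (Neps α ε), |α k| := by
    classical
    apply Finset.sum_filter_of_ne
    intro k _ hk
    exact fun h0 => hk (by simp [h0])
  calc ∑' k, |α k| = ∑ k ∈ Finset.range (Neps α ε), |α k| + ∑' k : ℕ, |α (k + Neps α ε)| :=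
        hsplit
    _ ≤ ∑ k ∈ Finset.range (Neps α ε), |α k| + ε := by linarith
    _ = (∑ k ∈ epsSupport α ε, |α k|) + ε := by rw [hfilter]

set_option maxHeartbeats 1000000 in
/-- If `‖H‖ = 1`, `H = ∑ α_k φ_k = ∑ β_l ψ_l` with absolutely summable coefficients, then
for every ε > 0, `1 ≤ μ (∑_{k ∈ Γ_ε(α)} |α_k| + ε)(∑_{l ∈ Γ_ε(β)} |β_l| + ε)`, where
`μ = sup_{k,l} |⟨φ_k, ψ_l⟩|` is the mutual coherence. -/
theorem one_le_mu_mul_epsSupport_sums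
    {H : Type*} [NormedAddCommGroup H] [InnerProductSpace ℝ H] [CompleteSpace H]
    (φ ψ : HilbertBasis ℕ ℝ H) (x : H) (hx : ‖x‖ = 1)
    (α β : ℕ → ℝ)
    (hα : Summable fun k => |α k|) (hβ : Summable fun l => |β l|)
    (hrepα : HasSum (fun k => α k • (φ k : H)) x)
    (hrepβ : HasSum (fun l => β l • (ψ l : H)) x)
    (ε : ℝ) (hε : 0 < ε) :
    1 ≤ (⨆ p : ℕ × ℕ, |(inner ℝ (φ p.1) (ψ p.2) : ℝ)|) *
        ((∑ k ∈ epsSupport α ε, |α k|) + ε) * ((∑ l ∈ epsSupport β ε, |β l|) + ε) := by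
  set μ := ⨆ p : ℕ × ℕ, |(inner ℝ (φ p.1) (ψ p.2) : ℝ)| with hμdef
  have hbdd : BddAbove (Set.range fun p : ℕ × ℕ => |(inner ℝ (φ p.1) (ψ p.2) : ℝ)|) := by
    refine ⟨1, ?_⟩
    rintro _ ⟨p, rfl⟩
    calc |(inner ℝ (φ p.1) (ψ p.2) : ℝ)| ≤ ‖(φ p.1 : H)‖ * ‖(ψ p.2 : H)‖ := abs_real_inner_le_norm _ _
      _ = 1 := by rw [φ.orthonormal.1, ψ.orthonormal.1]; ring
  have hμle : ∀ k l, |(inner ℝ (φ k) (ψ l) : ℝ)| ≤ μ := fun k l =>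
    le_ciSup hbdd (k, l)
  have hμ0 : 0 ≤ μ := le_trans (abs_nonneg _) (hμle 0 0)
  set A := ∑' k, |α k| with hA
  set B := ∑' l, |β l| with hB
  have hA0 : 0 ≤ A := tsum_nonneg fun _ => abs_nonneg _
  have hB0 : 0 ≤ B := tsum_nonneg fun _ => abs_nonneg _
  -- inner (ψ l) x = ∑ α k * inner (ψ l) (φ k)
  have hinner : ∀ l, |(inner ℝ (ψ l) x : ℝ)| ≤ μ * A := by
    intro l
    have hs : HasSum (fun k => α k * (inner ℝ (ψ l) (φ k) : ℝ)) (inner ℝ (ψ l) x : ℝ) := by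
      have := (innerSL ℝ ((ψ l : H))).hasSum hrepα
      simpa [inner_smul_right] using this
    have habs : Summable fun k => |α k| * |(inner ℝ (ψ l) (φ k) : ℝ)| := by
      apply Summable.of_nonneg_of_le (fun k => by positivity)
        (fun k => mul_le_of_le_one_right (abs_nonneg _) ?_) hα
      calc |(inner ℝ (ψ l) (φ k) : ℝ)| ≤ ‖(ψ l : H)‖ * ‖(φ k : H)‖ := abs_real_inner_le_norm _ _
        _ = 1 := by rw [φ.orthonormal.1, ψ.orthonormal.1]; ring
    calc |(inner ℝ (ψ l) x : ℝ)| = |∑' k, α k * (inner ℝ (ψ l) (φ k) : ℝ)| := by rw [hs.tsum_eq]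
      _ ≤ ∑' k, |α k * (inner ℝ (ψ l) (φ k) : ℝ)| := by
          have hsa : Summable fun k => ‖α k * (inner ℝ (ψ l) (φ k) : ℝ)‖ := by
            simp only [Real.norm_eq_abs, abs_mul]; exact habs
          have h := norm_tsum_le_tsum_norm hsa
          simp only [Real.norm_eq_abs] at h
          exact h
      _ = ∑' k, |α k| * |(inner ℝ (ψ l) (φ k) : ℝ)| := by
          simp [abs_mul]
      _ ≤ ∑' k, |α k| * μ := by
          apply Summable.tsum_le_tsum _ habs (hα.mul_right μ)
          intro k
          exact mul_le_mul_of_nonneg_left (by rw [real_inner_comm]; exact hμle k l)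
            (abs_nonneg _)
      _ = μ * A := by rw [tsum_mul_right]; ring
  have hxx : (inner ℝ x x : ℝ) = 1 := by
    rw [real_inner_self_eq_norm_sq, hx]; ring
  have hs2 : HasSum (fun l => β l * (inner ℝ (ψ l) x : ℝ)) (inner ℝ x x : ℝ) := by
    have := (innerSL ℝ x).hasSum hrepβ
    have h2 : HasSum (fun l => (inner ℝ x (β l • (ψ l : H)) : ℝ)) (inner ℝ x x : ℝ) := this
    simpa [inner_smul_right, real_inner_comm] using h2
  have habs2 : Summable fun l => |β l| * |(inner ℝ (ψ l) x : ℝ)| := by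
    apply Summable.of_nonneg_of_le (fun l => by positivity)
      (fun l => mul_le_mul_of_nonneg_left (hinner l) (abs_nonneg _)) (hβ.mul_right (μ * A))
  have key : 1 ≤ μ * A * B := by
    calc (1 : ℝ) = |(inner ℝ x x : ℝ)| := by rw [hxx]; norm_num
      _ = |∑' l, β l * (inner ℝ (ψ l) x : ℝ)| := by rw [hs2.tsum_eq]
      _ ≤ ∑' l, |β l * (inner ℝ (ψ l) x : ℝ)| := by
          have hsb : Summable fun l => ‖β l * (inner ℝ (ψ l) x : ℝ)‖ := by
            simp only [Real.norm_eq_abs, abs_mul]; exact habs2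
          have h := norm_tsum_le_tsum_norm hsb
          simp only [Real.norm_eq_abs] at h
          exact h
      _ = ∑' l, |β l| * |(inner ℝ (ψ l) x : ℝ)| := by simp [abs_mul]
      _ ≤ ∑' l, |β l| * (μ * A) := by
          apply Summable.tsum_le_tsum _ habs2 (hβ.mul_right (μ * A))
          intro l
          exact mul_le_mul_of_nonneg_left (hinner l) (abs_nonneg _)
      _ = μ * A * B := by rw [tsum_mul_right]; ring
  have hA' : A ≤ (∑ k ∈ epsSupport α ε, |α k|) + ε := tsum_abs_le_epsSupport α hα hε
  have hB' : B ≤ (∑ l ∈ epsSupport β ε, |β l|) + ε := tsum_abs_le_epsSupport β hβ hε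
  have hS0 : 0 ≤ ∑ k ∈ epsSupport α ε, |α k| := Finset.sum_nonneg fun _ _ => abs_nonneg _
  calc (1 : ℝ) ≤ μ * A * B := key
    _ ≤ μ * ((∑ k ∈ epsSupport α ε, |α k|) + ε) * ((∑ l ∈ epsSupport β ε, |β l|) + ε) := by
        apply mul_le_mul
        · exact mul_le_mul_of_nonneg_left hA' hμ0
        · exact hB'
        · exact hB0
        · positivity
end

section
/- Let A be a real m×n matrix, T ⊆ {1,…,n}, and θ ∈ ℝⁿ a vector supported on T. Suppose the submatrix A_T consisting of the columns of A indexed by T has full column rank, and suppose there exists a vector π ∈ ℝⁿ such that: (1) π is in the row space of A, i.e. π = Aᵀw for some w ∈ ℝᵐ; (2) π_t = sgn(θ_t) for every t ∈ T; (3) |π_t| < 1 for every t ∉ T. Then θ is the unique minimizer of ‖x‖₁ over all x ∈ ℝⁿ satisfying Ax = Aθ. -/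
/-- **Dual certificate implies ℓ¹-uniqueness.** If `θ` is supported on `T`, the columns of `A`
indexed by `T` are linearly independent, and some vector `π = Aᵀ w` in the row space of `A`
satisfies `π_t = sgn(θ_t)` on `T` and `|π_t| < 1` off `T`, then `θ` is the unique minimizer of
`‖x‖₁` subject to `A x = A θ`. -/
theorem dual_certificate_l1_unique_minimizer
    {m n : ℕ} (A : Matrix (Fin m) (Fin n) ℝ) (T : Finset (Fin n)) (θ : Fin n → ℝ)
    (hsupp : ∀ t, θ t ≠ 0 → t ∈ T)
    (hrank : LinearIndependent ℝ (fun t : {t // t ∈ T} => fun i : Fin m => A i (t : Fin n)))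
    (π : Fin n → ℝ) (w : Fin m → ℝ)
    (hπrow : π = fun j => ∑ i, A i j * w i)
    (hπsign : ∀ t ∈ T, π t = Real.sign (θ t))
    (hπlt : ∀ t ∉ T, |π t| < 1) :
    ∀ x : Fin n → ℝ, A.mulVec x = A.mulVec θ → x ≠ θ →
      (∑ t, |θ t|) < ∑ t, |x t| := by
  intro x hAx hxne
  by_contra hlt
  push_neg at hlt
  -- |π t| ≤ 1 everywhere
  have hπle : ∀ t, |π t| ≤ 1 := by
    intro t
    by_cases ht : t ∈ T
    · rw [hπsign t ht]
      rcases lt_trichotomy (θ t) 0 with h | h | h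
      · rw [Real.sign_of_neg h]; norm_num
      · rw [h, Real.sign_zero]; norm_num
      · rw [Real.sign_of_pos h]; norm_num
    · exact (hπlt t ht).le
  have hpt : ∀ t, π t * x t ≤ |x t| := by
    intro t
    calc π t * x t ≤ |π t * x t| := le_abs_self _
    _ = |π t| * |x t| := abs_mul _ _
    _ ≤ 1 * |x t| := mul_le_mul_of_nonneg_right (hπle t) (abs_nonneg _)
    _ = |x t| := one_mul _
  have hπθ : ∑ t, π t * θ t = ∑ t, |θ t| := by
    apply Finset.sum_congr rfl
    intro t _
    by_cases hθ : θ t = 0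
    · simp [hθ]
    · rw [hπsign t (hsupp t hθ)]
      rcases lt_trichotomy (θ t) 0 with h | h | h
      · rw [Real.sign_of_neg h, abs_of_neg h]; ring
      · exact absurd h hθ
      · rw [Real.sign_of_pos h, abs_of_pos h]; ring
  have key : ∀ y : Fin n → ℝ, ∑ t, π t * y t = ∑ i, w i * A.mulVec y i := by
    intro y
    subst hπrow
    simp only [Matrix.mulVec, dotProduct, Finset.sum_mul, Finset.mul_sum]
    rw [Finset.sum_comm]
    apply Finset.sum_congr rfl; intros
    apply Finset.sum_congr rfl; intros; ring
  have hπx : ∑ t, π t * x t = ∑ t, π t * θ t := by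
    rw [key x, key θ, hAx]
  have hle2 : ∑ t, |x t| ≤ ∑ t, π t * x t := by
    rw [hπx, hπθ]; exact hlt
  have heq : ∀ t, π t * x t = |x t| := by
    by_contra hc
    push_neg at hc
    obtain ⟨t, ht⟩ := hc
    have hlt2 : ∑ t, π t * x t < ∑ t, |x t| :=
      Finset.sum_lt_sum (fun t _ => hpt t)
        ⟨t, Finset.mem_univ t, lt_of_le_of_ne (hpt t) ht⟩
    linarith
  have hxT : ∀ t ∉ T, x t = 0 := by
    intro t ht
    by_contra hx0
    have hx : 0 < |x t| := abs_pos.mpr hx0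
    have h1 : |x t| = |π t| * |x t| := by
      rw [← abs_mul, heq t, abs_abs]
    nlinarith [hπlt t ht]
  have hdiff : ∀ t ∉ T, x t - θ t = 0 := by
    intro t ht
    have hθ0 : θ t = 0 := by
      by_contra h; exact ht (hsupp t h)
    rw [hxT t ht, hθ0, sub_zero]
  -- linear independence forces x = θ on T
  have hsum : ∑ t : {t // t ∈ T}, (x (t : Fin n) - θ (t : Fin n)) •
      (fun i : Fin m => A i (t : Fin n)) = 0 := by
    funext i
    simp only [Finset.sum_apply, Pi.smul_apply, smul_eq_mul, Pi.zero_apply]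
    have h1 : ∑ t : {t // t ∈ T}, (x (t : Fin n) - θ (t : Fin n)) * A i (t : Fin n)
        = ∑ t ∈ T, (x t - θ t) * A i t := by
      rw [← Finset.sum_coe_sort T (fun t => (x t - θ t) * A i t)]
    rw [h1]
    have h2 : ∑ t ∈ T, (x t - θ t) * A i t = ∑ t, (x t - θ t) * A i t := by
      apply Finset.sum_subset (Finset.subset_univ T)
      intro t _ ht
      rw [hdiff t ht, zero_mul]
    rw [h2]
    have h3 := congrFun hAx i
    simp only [Matrix.mulVec, dotProduct] at h3
    have : ∑ t, (x t - θ t) * A i t = ∑ t, A i t * x t - ∑ t, A i t * θ t := by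
      rw [← Finset.sum_sub_distrib]
      apply Finset.sum_congr rfl; intros; ring
    rw [this, h3, sub_self]
  have hz := Fintype.linearIndependent_iff.mp hrank
    (fun t : {t // t ∈ T} => x (t : Fin n) - θ (t : Fin n)) hsum
  apply hxne
  funext t
  by_cases ht : t ∈ T
  · have := hz ⟨t, ht⟩
    simpa [sub_eq_zero] using this
  · have hθ0 : θ t = 0 := by
      by_contra h; exact ht (hsupp t h)
    rw [hxT t ht, hθ0]
end

section
/- Let (τ(t))_{t ∈ T} be i.i.d. symmetric Bernoulli (±1 with probability 1/2) random variables independent of the Bernoulli sampling variables δ₁,…,δ_N, and for each t₀ ∈ T^c define (on the event that M_Ω* M_Ω is invertible) π(t₀) = ⟨w⁰, τ⟩, where w⁰ = (M_Ω* M_Ω)^{−1} v⁰ and v⁰ = Σ_{k=1}^N δ_k λ_k⁰ x_k with λ_k⁰ the (k, t₀) entry of [Φ Ψ]. Then for every λ > 0, P( sup_{t ∈ T^c} |π(t)| ≥ 1 ) ≤ 2(n₁+n₂) e^{−1/(2λ²)} + P( sup_{t₀ ∈ T^c} ‖w⁰‖ ≥ λ ). -/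
open Matrix ComplexConjugate

noncomputable section

/-- Spectral norm (largest singular value) of a complex matrix. -/
def specNorm {p q : Type*} [Fintype p] [Fintype q] [DecidableEq q] (A : Matrix p q ℂ) : ℝ :=
  ‖LinearMap.toContinuousLinearMap (Matrix.toEuclideanLin A)‖

/-- Euclidean norm of a vector. -/
def vecNorm {p : Type*} [Fintype p] (v : p → ℂ) : ℝ :=
  Real.sqrt (∑ i, ‖v i‖ ^ 2)

/-- Euclidean inner product `⟨u, v⟩ = ∑ conj(u_i) v_i`. -/
def cInner {p : Type*} [Fintype p] (u v : p → ℂ) : ℂ := ∑ i, conj (u i) * v i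

/-- Mutual coherence `μ(Φ,Ψ) = max_{i,j} |⟨Φ_i, Ψ_j⟩| / (‖Φ_i‖ ‖Ψ_j‖)` over columns. -/
def mutualCoherence {N n₁ n₂ : ℕ} (Φ : Matrix (Fin N) (Fin n₁) ℂ)
    (Ψ : Matrix (Fin N) (Fin n₂) ℂ) : ℝ :=
  ⨆ i : Fin n₁, ⨆ j : Fin n₂,
    ‖cInner (fun k => Φ k i) (fun k => Ψ k j)‖ /
      (vecNorm (fun k => Φ k i) * vecNorm (fun k => Ψ k j))

/-- `μ_M = max{μ_Φ, μ_Ψ}`: the largest entry magnitude of the two matrices. -/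
def muMax {N n₁ n₂ : ℕ} (Φ : Matrix (Fin N) (Fin n₁) ℂ)
    (Ψ : Matrix (Fin N) (Fin n₂) ℂ) : ℝ :=
  max (⨆ k, ⨆ i, ‖Φ k i‖) (⨆ k, ⨆ j, ‖Ψ k j‖)

/-- `x_k`: the `k`-th row of `[Φ_{T₁} Ψ_{T₂}]`, indexed by `↥T₁ ⊕ ↥T₂`. -/
def rowT {N n₁ n₂ : ℕ} (Φ : Matrix (Fin N) (Fin n₁) ℂ) (Ψ : Matrix (Fin N) (Fin n₂) ℂ)
    (T₁ : Finset (Fin n₁)) (T₂ : Finset (Fin n₂)) (k : Fin N) : (↥T₁ ⊕ ↥T₂) → ℂ :=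
  Sum.elim (fun t => Φ k t) (fun t => Ψ k t)

/-- `F = [[I, Φ_{T₁}*Ψ_{T₂}/N],[Ψ_{T₂}*Φ_{T₁}/N, I]] = (1/N) ∑_k x_k x_k*`. -/
def Fmat {N n₁ n₂ : ℕ} (Φ : Matrix (Fin N) (Fin n₁) ℂ) (Ψ : Matrix (Fin N) (Fin n₂) ℂ)
    (T₁ : Finset (Fin n₁)) (T₂ : Finset (Fin n₂)) : Matrix (↥T₁ ⊕ ↥T₂) (↥T₁ ⊕ ↥T₂) ℂ :=
  Matrix.of fun i j =>
    (N : ℂ)⁻¹ * ∑ k, conj (rowT Φ Ψ T₁ T₂ k i) * rowT Φ Ψ T₁ T₂ k j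

/-- `M_Ω* M_Ω = ∑_{k ∈ Ω} x_k x_k*` where `Ω = {k : δ_k = 1}` is encoded by `b : Fin N → Bool`. -/
def gram {N n₁ n₂ : ℕ} (Φ : Matrix (Fin N) (Fin n₁) ℂ) (Ψ : Matrix (Fin N) (Fin n₂) ℂ)
    (T₁ : Finset (Fin n₁)) (T₂ : Finset (Fin n₂)) (b : Fin N → Bool) :
    Matrix (↥T₁ ⊕ ↥T₂) (↥T₁ ⊕ ↥T₂) ℂ :=
  Matrix.of fun i j =>
    ∑ k, (if b k then (1 : ℂ) else 0) * (conj (rowT Φ Ψ T₁ T₂ k i) * rowT Φ Ψ T₁ T₂ k j)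

/-- Weight of the configuration `b` under the i.i.d. Bernoulli(`p`) model on `{0,1}^N`. -/
def bernWeight (N : ℕ) (p : ℝ) (b : Fin N → Bool) : ℝ :=
  ∏ k, if b k then p else 1 - p

/-- Probability of an event under the i.i.d. Bernoulli(`p`) model on `{0,1}^N`. -/
def bernProb (N : ℕ) (p : ℝ) (E : (Fin N → Bool) → Prop) : ℝ :=
  ∑ b : Fin N → Bool, Set.indicator {b | E b} (bernWeight N p) b

/-- Expectation under the i.i.d. Bernoulli(`p`) model on `{0,1}^N`. -/
def bernExp (N : ℕ) (p : ℝ) (f : (Fin N → Bool) → ℝ) : ℝ :=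
  ∑ b : Fin N → Bool, bernWeight N p b * f b

/-- The spectral norm of the block `Φ_{T₁}* Ψ_{T₂} / N`. -/
def blockNorm {N n₁ n₂ : ℕ} (Φ : Matrix (Fin N) (Fin n₁) ℂ) (Ψ : Matrix (Fin N) (Fin n₂) ℂ)
    (T₁ : Finset (Fin n₁)) (T₂ : Finset (Fin n₂)) : ℝ :=
  specNorm (Matrix.of fun (t₁ : ↥T₁) (t₂ : ↥T₂) =>
    (N : ℂ)⁻¹ * cInner (fun k => Φ k (t₁ : Fin n₁)) (fun k => Ψ k (t₂ : Fin n₂)))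

end

noncomputable section

/-- `λ_k⁰`: the `(k, t₀)` entry of `[Φ Ψ]`. -/
def lamEntry {N n₁ n₂ : ℕ} (Φ : Matrix (Fin N) (Fin n₁) ℂ) (Ψ : Matrix (Fin N) (Fin n₂) ℂ)
    (t₀ : Fin n₁ ⊕ Fin n₂) (k : Fin N) : ℂ :=
  Sum.elim (Φ k) (Ψ k) t₀

/-- `v⁰ = ∑_k δ_k λ_k⁰ x_k` under the Bernoulli configuration `b`. -/
def vZero {N n₁ n₂ : ℕ} (Φ : Matrix (Fin N) (Fin n₁) ℂ) (Ψ : Matrix (Fin N) (Fin n₂) ℂ)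
    (T₁ : Finset (Fin n₁)) (T₂ : Finset (Fin n₂)) (t₀ : Fin n₁ ⊕ Fin n₂)
    (b : Fin N → Bool) : (↥T₁ ⊕ ↥T₂) → ℂ :=
  fun i => ∑ k, (if b k then (1 : ℂ) else 0) * (lamEntry Φ Ψ t₀ k * rowT Φ Ψ T₁ T₂ k i)

/-- `w⁰ = (M_Ω* M_Ω)⁻¹ v⁰` (junk value when the Gram matrix is not invertible). -/
def wZero {N n₁ n₂ : ℕ} (Φ : Matrix (Fin N) (Fin n₁) ℂ) (Ψ : Matrix (Fin N) (Fin n₂) ℂ)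
    (T₁ : Finset (Fin n₁)) (T₂ : Finset (Fin n₂)) (t₀ : Fin n₁ ⊕ Fin n₂)
    (b : Fin N → Bool) : (↥T₁ ⊕ ↥T₂) → ℂ :=
  (gram Φ Ψ T₁ T₂ b)⁻¹.mulVec (vZero Φ Ψ T₁ T₂ t₀ b)

/-- Probability of an event for the Bernoulli(`p`) sampling variables together with independent
uniform ±1 signs indexed by `ι` (encoded by `Bool`). -/
def bernSignProb (N : ℕ) (p : ℝ) {ι : Type*} [Fintype ι] [DecidableEq ι]
    (E : (Fin N → Bool) × (ι → Bool) → Prop) : ℝ :=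
  ∑ q : (Fin N → Bool) × (ι → Bool),
    Set.indicator {q | E q}
      (fun q => bernWeight N p q.1 * (1 / 2) ^ (Fintype.card ι)) q

end


section AuxProof

open Real


lemma aux_sinh_le (t : ℝ) (ht : 0 ≤ t) : Real.sinh t ≤ t * Real.cosh t := by
  have key : MonotoneOn (fun u : ℝ => u * Real.cosh u - Real.sinh u) (Set.Ici 0) := by
    have hd : ∀ u : ℝ, HasDerivAt (fun u : ℝ => u * Real.cosh u - Real.sinh u)
        (u * Real.sinh u) u := by
      intro u
      have h1 := ((hasDerivAt_id u).mul (Real.hasDerivAt_cosh u)).sub (Real.hasDerivAt_sinh u)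
      have h2 : 1 * Real.cosh u + id u * Real.sinh u - Real.cosh u = u * Real.sinh u := by
        simp only [id_eq]; ring
      exact h2 ▸ h1
    apply monotoneOn_of_deriv_nonneg (convex_Ici 0)
    · exact Continuous.continuousOn (by continuity)
    · intro x _
      exact (hd x).differentiableAt.differentiableWithinAt
    · intro x hx
      rw [interior_Ici] at hx
      rw [(hd x).deriv]
      have hx0 : (0:ℝ) < x := hx
      exact mul_nonneg hx0.le (Real.sinh_nonneg_iff.mpr hx0.le)
  have h0 := key Set.self_mem_Ici (Set.mem_Ici.mpr ht) ht
  simp only [Real.sinh_zero, Real.cosh_zero, zero_mul, sub_zero, mul_one] at h0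
  linarith

lemma aux_sinh_div_mono : MonotoneOn (fun t : ℝ => Real.sinh t / t) (Set.Ioi 0) := by
  apply monotoneOn_of_deriv_nonneg (convex_Ioi 0)
  · apply ContinuousOn.div Real.continuous_sinh.continuousOn continuousOn_id
    intro x hx; exact ne_of_gt hx
  · intro x hx
    rw [interior_Ioi] at hx
    have hd : HasDerivAt (fun t : ℝ => Real.sinh t / t)
        ((Real.cosh x * x - Real.sinh x * 1) / x ^ 2) x :=
      (Real.hasDerivAt_sinh x).div (hasDerivAt_id x) (ne_of_gt (Set.mem_Ioi.mp hx))
    exact hd.differentiableAt.differentiableWithinAt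
  · intro x hx
    rw [interior_Ioi] at hx
    have hx0 : (0:ℝ) < x := hx
    have hd : HasDerivAt (fun t : ℝ => Real.sinh t / t)
        ((Real.cosh x * x - Real.sinh x * 1) / x ^ 2) x :=
      (Real.hasDerivAt_sinh x).div (hasDerivAt_id x) (ne_of_gt hx0)
    rw [hd.deriv]
    have h1 := aux_sinh_le x hx0.le
    have hx2 : (0:ℝ) < x ^ 2 := by positivity
    apply div_nonneg _ hx2.le
    nlinarith

lemma aux_convex_cosh_sqrt : ConvexOn ℝ (Set.Ici 0) (fun u : ℝ => Real.cosh (Real.sqrt u)) := by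
  have hderiv : ∀ u : ℝ, 0 < u → HasDerivAt (fun u : ℝ => Real.cosh (Real.sqrt u))
      (Real.sinh (Real.sqrt u) * (1 / (2 * Real.sqrt u))) u := by
    intro u hu
    exact (Real.hasDerivAt_cosh (Real.sqrt u)).comp u (Real.hasDerivAt_sqrt (ne_of_gt hu))
  apply MonotoneOn.convexOn_of_deriv (convex_Ici 0)
  · exact (Real.continuous_cosh.comp Real.continuous_sqrt).continuousOn
  · intro x hx
    rw [interior_Ici] at hx
    exact (hderiv x hx).differentiableAt.differentiableWithinAt
  · rw [interior_Ici]
    intro a ha b hb hab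
    rw [(hderiv a ha).deriv, (hderiv b hb).deriv]
    have h1 : Real.sqrt a ≤ Real.sqrt b := Real.sqrt_le_sqrt hab
    have ha' : 0 < Real.sqrt a := Real.sqrt_pos.mpr ha
    have hb' : 0 < Real.sqrt b := Real.sqrt_pos.mpr hb
    have hm := aux_sinh_div_mono (Set.mem_Ioi.mpr ha') (Set.mem_Ioi.mpr hb') h1
    have ea : Real.sinh (Real.sqrt a) * (1 / (2 * Real.sqrt a))
        = (Real.sinh (Real.sqrt a) / Real.sqrt a) / 2 := by
      field_simp
    have eb : Real.sinh (Real.sqrt b) * (1 / (2 * Real.sqrt b))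
        = (Real.sinh (Real.sqrt b) / Real.sqrt b) / 2 := by
      field_simp
    rw [ea, eb]
    dsimp only at hm
    linarith

lemma cosh_sqrt_le (x y : ℝ) : Real.cosh (Real.sqrt (x^2 + y^2)) ≤ Real.cosh x * Real.cosh y := by
  have h := aux_convex_cosh_sqrt.2 (Set.mem_Ici.mpr (sq_nonneg (x+y)))
      (Set.mem_Ici.mpr (sq_nonneg (x-y)))
      (by norm_num : (0:ℝ) ≤ (1/2:ℝ)) (by norm_num : (0:ℝ) ≤ (1/2:ℝ)) (by norm_num)
  simp only [smul_eq_mul] at h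
  rw [show (1/2 : ℝ) * (x+y)^2 + (1/2) * (x-y)^2 = x^2 + y^2 by ring] at h
  rw [Real.sqrt_sq_eq_abs, Real.sqrt_sq_eq_abs, Real.cosh_abs, Real.cosh_abs,
    Real.cosh_add, Real.cosh_sub] at h
  linarith

lemma exp_sqrt_le (x y : ℝ) : Real.exp (Real.sqrt (x^2 + y^2)) ≤ 2 * (Real.cosh x * Real.cosh y) := by
  have h1 : Real.exp (Real.sqrt (x^2 + y^2)) ≤ 2 * Real.cosh (Real.sqrt (x^2 + y^2)) := by
    rw [Real.cosh_eq]
    have := Real.exp_pos (-(Real.sqrt (x^2 + y^2)))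
    linarith
  have h2 := cosh_sqrt_le x y
  linarith



lemma rad_mgf {ι : Type*} [Fintype ι] [DecidableEq ι] (d : ι → ℝ) :
    ∑ τ : ι → Bool, (1/2 : ℝ) ^ Fintype.card ι *
      Real.exp (∑ t, (if τ t then (1:ℝ) else -1) * d t) ≤
      Real.exp ((∑ t, d t ^ 2) / 2) := by
  have h1 : ∀ τ : ι → Bool, (1/2 : ℝ) ^ Fintype.card ι *
      Real.exp (∑ t, (if τ t then (1:ℝ) else -1) * d t)
      = ∏ t, ((1/2 : ℝ) * Real.exp ((if τ t then (1:ℝ) else -1) * d t)) := by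
    intro τ
    rw [Finset.prod_mul_distrib, Finset.prod_const, Finset.card_univ, Real.exp_sum]
  calc ∑ τ : ι → Bool, (1/2 : ℝ) ^ Fintype.card ι *
        Real.exp (∑ t, (if τ t then (1:ℝ) else -1) * d t)
      = ∑ τ : ι → Bool, ∏ t, ((1/2 : ℝ) * Real.exp ((if τ t then (1:ℝ) else -1) * d t)) :=
        Finset.sum_congr rfl fun τ _ => h1 τ
    _ = ∏ t, ∑ j : Bool, ((1/2 : ℝ) * Real.exp ((if j then (1:ℝ) else -1) * d t)) :=
        (Fintype.prod_sum fun t (j : Bool) =>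
          (1/2 : ℝ) * Real.exp ((if j then (1:ℝ) else -1) * d t)).symm
    _ = ∏ t, Real.cosh (d t) := by
        apply Finset.prod_congr rfl
        intro t _
        rw [Fintype.sum_bool]
        norm_num [Real.cosh_eq]
        ring
    _ ≤ ∏ t, Real.exp (d t ^ 2 / 2) := by
        apply Finset.prod_le_prod
        · intro t _; exact (Real.cosh_pos (d t)).le
        · intro t _; exact Real.cosh_le_exp_half_sq (d t)
    _ = Real.exp ((∑ t, d t ^ 2) / 2) := by
        rw [← Real.exp_sum, Finset.sum_div]

set_option maxHeartbeats 2000000 in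
lemma hoeffding_complex {ι : Type*} [Fintype ι] [DecidableEq ι] (w : ι → ℂ) (lam : ℝ)
    (hlam : 0 < lam) (hw : Real.sqrt (∑ t, ‖w t‖ ^ 2) ≤ lam) :
    ∑ τ : ι → Bool, (1/2 : ℝ) ^ Fintype.card ι *
      (if ‖∑ t, w t * (if τ t then (1:ℂ) else -1)‖ ≥ 1 then (1:ℝ) else 0)
      ≤ 2 * Real.exp (-(1 / (2 * lam ^ 2))) := by
  classical
  set σsq := ∑ t, ‖w t‖ ^ 2 with hσdef
  have hσ0 : 0 ≤ σsq := Finset.sum_nonneg fun t _ => sq_nonneg _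
  have hσlam : σsq ≤ lam ^ 2 := by
    have h := Real.sq_sqrt hσ0
    nlinarith [Real.sqrt_nonneg σsq]
  obtain ⟨ω, habs, him⟩ : ∃ ω : ℂ, ‖ω‖ = 1 ∧ (∑ t, (ω * w t) ^ 2).im = 0 := by
    have hsum : ∀ ω : ℂ, ∑ t, (ω * w t) ^ 2 = ω ^ 2 * ∑ t, (w t) ^ 2 := by
      intro ω; rw [Finset.mul_sum]; exact Finset.sum_congr rfl fun t _ => by ring
    by_cases hA : (∑ t, (w t) ^ 2) = 0
    · exact ⟨1, by simp, by rw [hsum, hA, mul_zero, Complex.zero_im]⟩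
    · obtain ⟨ω, hω⟩ := IsAlgClosed.exists_pow_nat_eq
        ((starRingEnd ℂ) (∑ t, (w t) ^ 2) / (‖∑ t, (w t) ^ 2‖ : ℂ))
        (by norm_num : 0 < 2)
      have habsA : ‖∑ t, (w t) ^ 2‖ ≠ 0 := norm_ne_zero_iff.mpr hA
      refine ⟨ω, ?_, ?_⟩
      · have h2 : ‖ω‖ ^ 2 = 1 := by
          rw [← norm_pow, hω, norm_div, Complex.norm_conj, Complex.norm_real,
            norm_norm, div_self habsA]
        have h3 : ‖ω‖ = Real.sqrt 1 := by
          rw [← h2, Real.sqrt_sq (norm_nonneg ω)]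
        simpa using h3
      · rw [hsum, hω, div_mul_eq_mul_div, mul_comm ((starRingEnd ℂ) _) _, Complex.mul_conj,
          ← Complex.ofReal_div]
        exact Complex.ofReal_im _
  have hsq : ∀ t, (ω * w t).re ^ 2 + (ω * w t).im ^ 2 = ‖w t‖ ^ 2 := by
    intro t
    have h2 : ‖ω * w t‖ = ‖w t‖ := by
      rw [norm_mul, habs, one_mul]
    have h := Complex.sq_norm (ω * w t)
    rw [Complex.normSq_apply, h2] at h
    rw [h]
    ring
  have hnorm : ∑ t, ((ω * w t).re ^ 2 + (ω * w t).im ^ 2) = σsq :=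
    Finset.sum_congr rfl fun t _ => hsq t
  have hcross : ∑ t, (ω * w t).re * (ω * w t).im = 0 := by
    have h1 : ∀ t : ι, (ω * w t).re * (ω * w t).im = ((ω * w t) ^ 2).im / 2 := by
      intro t
      simp only [sq, Complex.mul_im, Complex.mul_re]
      ring
    calc ∑ t, (ω * w t).re * (ω * w t).im = ∑ t, ((ω * w t) ^ 2).im / 2 :=
          Finset.sum_congr rfl fun t _ => h1 t
      _ = (∑ t, (ω * w t) ^ 2).im / 2 := by rw [Complex.im_sum, Finset.sum_div]
      _ = 0 := by rw [him]; norm_num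
  have hcp : ∑ t, ((ω * w t).re + (ω * w t).im) ^ 2 = σsq := by
    have h1 : ∀ t : ι, ((ω * w t).re + (ω * w t).im) ^ 2
        = ((ω * w t).re ^ 2 + (ω * w t).im ^ 2) + 2 * ((ω * w t).re * (ω * w t).im) :=
      fun t => by ring
    rw [Finset.sum_congr rfl fun t _ => h1 t, Finset.sum_add_distrib, ← Finset.mul_sum,
      hnorm, hcross, mul_zero, add_zero]
  have hcm : ∑ t, ((ω * w t).re - (ω * w t).im) ^ 2 = σsq := by
    have h1 : ∀ t : ι, ((ω * w t).re - (ω * w t).im) ^ 2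
        = ((ω * w t).re ^ 2 + (ω * w t).im ^ 2) - 2 * ((ω * w t).re * (ω * w t).im) :=
      fun t => by ring
    rw [Finset.sum_congr rfl fun t _ => h1 t, Finset.sum_sub_distrib, ← Finset.mul_sum,
      hnorm, hcross, mul_zero, sub_zero]
  set s : ℝ := 1 / lam ^ 2 with hs
  have hs0 : 0 < s := by rw [hs]; positivity
  have hpt : ∀ τ : ι → Bool,
      (if ‖∑ t, w t * (if τ t then (1:ℂ) else -1)‖ ≥ 1 then (1:ℝ) else 0) ≤
      Real.exp (-s) / 2 *
        (Real.exp (∑ t, (if τ t then (1:ℝ) else -1) * (s * ((ω * w t).re + (ω * w t).im)))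
        + Real.exp (∑ t, (if τ t then (1:ℝ) else -1) * (-(s * ((ω * w t).re + (ω * w t).im))))
        + Real.exp (∑ t, (if τ t then (1:ℝ) else -1) * (s * ((ω * w t).re - (ω * w t).im)))
        + Real.exp (∑ t, (if τ t then (1:ℝ) else -1) * (-(s * ((ω * w t).re - (ω * w t).im))))) := by
    intro τ
    set X := ∑ t, (if τ t then (1:ℝ) else -1) * (ω * w t).re with hX
    set Y := ∑ t, (if τ t then (1:ℝ) else -1) * (ω * w t).im with hY
    have hlin : ∀ (c1 c2 : ℝ), ∑ t, (if τ t then (1:ℝ) else -1) *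
        (c1 * (ω * w t).re + c2 * (ω * w t).im) = c1 * X + c2 * Y := by
      intro c1 c2
      rw [hX, hY, Finset.mul_sum, Finset.mul_sum, ← Finset.sum_add_distrib]
      exact Finset.sum_congr rfl fun t _ => by ring
    have e1 : ∑ t, (if τ t then (1:ℝ) else -1) * (s * ((ω * w t).re + (ω * w t).im))
        = s * X + s * Y := by
      rw [← hlin s s]
      exact Finset.sum_congr rfl fun t _ => by ring
    have e2 : ∑ t, (if τ t then (1:ℝ) else -1) * (-(s * ((ω * w t).re + (ω * w t).im)))
        = -(s * X) + -(s * Y) := by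
      have h := hlin (-s) (-s)
      rw [neg_mul, neg_mul] at h
      rw [← h]
      exact Finset.sum_congr rfl fun t _ => by ring
    have e3 : ∑ t, (if τ t then (1:ℝ) else -1) * (s * ((ω * w t).re - (ω * w t).im))
        = s * X + -(s * Y) := by
      have h := hlin s (-s)
      rw [neg_mul] at h
      rw [← h]
      exact Finset.sum_congr rfl fun t _ => by ring
    have e4 : ∑ t, (if τ t then (1:ℝ) else -1) * (-(s * ((ω * w t).re - (ω * w t).im)))
        = -(s * X) + s * Y := by
      have h := hlin (-s) s
      rw [neg_mul] at h
      rw [← h]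
      exact Finset.sum_congr rfl fun t _ => by ring
    rw [e1, e2, e3, e4, Real.exp_add, Real.exp_add, Real.exp_add, Real.exp_add]
    by_cases hev : ‖∑ t, w t * (if τ t then (1:ℂ) else -1)‖ ≥ 1
    · rw [if_pos hev]
      have hSb : (∑ t, (ω * w t) * (if τ t then (1:ℂ) else -1))
          = ω * ∑ t, w t * (if τ t then (1:ℂ) else -1) := by
        rw [Finset.mul_sum]; exact Finset.sum_congr rfl fun t _ => by ring
      have habseq : ‖∑ t, (ω * w t) * (if τ t then (1:ℂ) else -1)‖
          = ‖∑ t, w t * (if τ t then (1:ℂ) else -1)‖ := by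
        rw [hSb, norm_mul, habs, one_mul]
      have hre : (∑ t, (ω * w t) * (if τ t then (1:ℂ) else -1)).re = X := by
        rw [Complex.re_sum, hX]
        apply Finset.sum_congr rfl
        intro t _
        by_cases h : τ t <;> simp [h, Complex.mul_re] <;> ring
      have him' : (∑ t, (ω * w t) * (if τ t then (1:ℂ) else -1)).im = Y := by
        rw [Complex.im_sum, hY]
        apply Finset.sum_congr rfl
        intro t _
        by_cases h : τ t <;> simp [h, Complex.mul_im] <;> ring
      have habsXY : ‖∑ t, (ω * w t) * (if τ t then (1:ℂ) else -1)‖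
          = Real.sqrt (X ^ 2 + Y ^ 2) := by
        rw [Complex.norm_def, Complex.normSq_apply, hre, him']
        congr 1
        ring
      have h1' : (1:ℝ) ≤ Real.sqrt (X ^ 2 + Y ^ 2) := by
        rw [← habsXY, habseq]
        exact hev
      have c1 : s ≤ Real.sqrt ((s*X)^2 + (s*Y)^2) := by
        have heq : Real.sqrt ((s*X)^2 + (s*Y)^2) = s * Real.sqrt (X^2 + Y^2) := by
          rw [show (s*X)^2 + (s*Y)^2 = s^2 * (X^2 + Y^2) by ring,
            Real.sqrt_mul (sq_nonneg s), Real.sqrt_sq hs0.le]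
        rw [heq]
        nlinarith
      have c2 := exp_sqrt_le (s*X) (s*Y)
      rw [Real.cosh_eq, Real.cosh_eq] at c2
      have hkey : Real.exp s ≤ (Real.exp (s*X) + Real.exp (-(s*X)))
          * (Real.exp (s*Y) + Real.exp (-(s*Y))) / 2 := by
        calc Real.exp s ≤ Real.exp (Real.sqrt ((s*X)^2 + (s*Y)^2)) := Real.exp_le_exp.mpr c1
          _ ≤ 2 * ((Real.exp (s*X) + Real.exp (-(s*X))) / 2
              * ((Real.exp (s*Y) + Real.exp (-(s*Y))) / 2)) := c2
          _ = (Real.exp (s*X) + Real.exp (-(s*X)))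
              * (Real.exp (s*Y) + Real.exp (-(s*Y))) / 2 := by ring
      have h6 := mul_le_mul_of_nonneg_left hkey (Real.exp_pos (-s)).le
      have hid : Real.exp (-s) * Real.exp s = 1 := by
        rw [← Real.exp_add]; simp
      rw [hid] at h6
      calc (1:ℝ) ≤ Real.exp (-s) * ((Real.exp (s*X) + Real.exp (-(s*X)))
            * (Real.exp (s*Y) + Real.exp (-(s*Y))) / 2) := h6
        _ = Real.exp (-s) / 2 * (Real.exp (s*X) * Real.exp (s*Y)
            + Real.exp (-(s*X)) * Real.exp (-(s*Y))
            + Real.exp (s*X) * Real.exp (-(s*Y))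
            + Real.exp (-(s*X)) * Real.exp (s*Y)) := by ring
    · rw [if_neg hev]
      positivity
  have hc : (0:ℝ) ≤ (1/2 : ℝ) ^ Fintype.card ι := by positivity
  have hsum := Finset.sum_le_sum
    (fun (τ : ι → Bool) (_ : τ ∈ Finset.univ) => mul_le_mul_of_nonneg_left (hpt τ) hc)
  refine le_trans hsum ?_
  have msum : ∀ d : ι → ℝ, (∑ t, d t ^ 2) = s^2 * σsq →
      ∑ τ : ι → Bool, (1/2 : ℝ) ^ Fintype.card ι *
        Real.exp (∑ t, (if τ t then (1:ℝ) else -1) * d t) ≤ Real.exp (s^2 * σsq / 2) := by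
    intro d hd
    have h := rad_mgf d
    rw [hd] at h
    exact h
  have m1 := msum (fun t => s * ((ω * w t).re + (ω * w t).im))
    (by rw [show ∑ t, (s * ((ω * w t).re + (ω * w t).im))^2
          = s^2 * ∑ t, ((ω * w t).re + (ω * w t).im)^2 by
        rw [Finset.mul_sum]; exact Finset.sum_congr rfl fun t _ => by ring, hcp])
  have m2 := msum (fun t => -(s * ((ω * w t).re + (ω * w t).im)))
    (by rw [show ∑ t, (-(s * ((ω * w t).re + (ω * w t).im)))^2
          = s^2 * ∑ t, ((ω * w t).re + (ω * w t).im)^2 by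
        rw [Finset.mul_sum]; exact Finset.sum_congr rfl fun t _ => by ring, hcp])
  have m3 := msum (fun t => s * ((ω * w t).re - (ω * w t).im))
    (by rw [show ∑ t, (s * ((ω * w t).re - (ω * w t).im))^2
          = s^2 * ∑ t, ((ω * w t).re - (ω * w t).im)^2 by
        rw [Finset.mul_sum]; exact Finset.sum_congr rfl fun t _ => by ring, hcm])
  have m4 := msum (fun t => -(s * ((ω * w t).re - (ω * w t).im)))
    (by rw [show ∑ t, (-(s * ((ω * w t).re - (ω * w t).im)))^2
          = s^2 * ∑ t, ((ω * w t).re - (ω * w t).im)^2 by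
        rw [Finset.mul_sum]; exact Finset.sum_congr rfl fun t _ => by ring, hcm])
  have expand : ∑ τ : ι → Bool, (1/2 : ℝ) ^ Fintype.card ι * (Real.exp (-s) / 2 *
        (Real.exp (∑ t, (if τ t then (1:ℝ) else -1) * (s * ((ω * w t).re + (ω * w t).im)))
        + Real.exp (∑ t, (if τ t then (1:ℝ) else -1) * (-(s * ((ω * w t).re + (ω * w t).im))))
        + Real.exp (∑ t, (if τ t then (1:ℝ) else -1) * (s * ((ω * w t).re - (ω * w t).im)))
        + Real.exp (∑ t, (if τ t then (1:ℝ) else -1) * (-(s * ((ω * w t).re - (ω * w t).im))))))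
      = Real.exp (-s) / 2 *
        ((∑ τ : ι → Bool, (1/2 : ℝ) ^ Fintype.card ι *
          Real.exp (∑ t, (if τ t then (1:ℝ) else -1) * (s * ((ω * w t).re + (ω * w t).im))))
        + (∑ τ : ι → Bool, (1/2 : ℝ) ^ Fintype.card ι *
          Real.exp (∑ t, (if τ t then (1:ℝ) else -1) * (-(s * ((ω * w t).re + (ω * w t).im)))))
        + (∑ τ : ι → Bool, (1/2 : ℝ) ^ Fintype.card ι *
          Real.exp (∑ t, (if τ t then (1:ℝ) else -1) * (s * ((ω * w t).re - (ω * w t).im))))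
        + (∑ τ : ι → Bool, (1/2 : ℝ) ^ Fintype.card ι *
          Real.exp (∑ t, (if τ t then (1:ℝ) else -1) * (-(s * ((ω * w t).re - (ω * w t).im)))))) := by
    rw [← Finset.sum_add_distrib, ← Finset.sum_add_distrib, ← Finset.sum_add_distrib,
      Finset.mul_sum]
    exact Finset.sum_congr rfl fun τ _ => by ring
  rw [expand]
  have hexp0 : (0:ℝ) < Real.exp (-s) := Real.exp_pos _
  have htot : Real.exp (-s) / 2 * ((∑ τ : ι → Bool, (1/2 : ℝ) ^ Fintype.card ι *
          Real.exp (∑ t, (if τ t then (1:ℝ) else -1) * (s * ((ω * w t).re + (ω * w t).im))))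
        + (∑ τ : ι → Bool, (1/2 : ℝ) ^ Fintype.card ι *
          Real.exp (∑ t, (if τ t then (1:ℝ) else -1) * (-(s * ((ω * w t).re + (ω * w t).im)))))
        + (∑ τ : ι → Bool, (1/2 : ℝ) ^ Fintype.card ι *
          Real.exp (∑ t, (if τ t then (1:ℝ) else -1) * (s * ((ω * w t).re - (ω * w t).im))))
        + (∑ τ : ι → Bool, (1/2 : ℝ) ^ Fintype.card ι *
          Real.exp (∑ t, (if τ t then (1:ℝ) else -1) * (-(s * ((ω * w t).re - (ω * w t).im))))))
      ≤ Real.exp (-s) / 2 * (4 * Real.exp (s^2 * σsq / 2)) := by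
    apply mul_le_mul_of_nonneg_left _ (by positivity)
    linarith [m1, m2, m3, m4]
  refine le_trans htot ?_
  have hfin : Real.exp (-s) / 2 * (4 * Real.exp (s^2 * σsq / 2))
      = 2 * Real.exp (-s + s^2 * σsq / 2) := by
    rw [Real.exp_add]; ring
  rw [hfin]
  have harg : -s + s^2 * σsq / 2 ≤ -(1 / (2 * lam^2)) := by
    have h1 : s^2 * σsq / 2 ≤ s^2 * lam^2 / 2 := by nlinarith [sq_nonneg s]
    have h2 : -s + s^2 * lam^2 / 2 = -(1 / (2 * lam^2)) := by
      rw [hs]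
      field_simp
      ring
    linarith
  have := Real.exp_le_exp.mpr harg
  linarith


lemma ite_nonneg_aux {x : ℝ} (hx : 0 ≤ x) (P : Prop) [Decidable P] :
    (0:ℝ) ≤ if P then x else 0 := by
  split_ifs
  · exact hx
  · exact le_rfl

lemma bernWeight_nonneg {N : ℕ} {p : ℝ} (hp0 : 0 ≤ p) (hp1 : p ≤ 1) (b : Fin N → Bool) :
    0 ≤ bernWeight N p b :=
  Finset.prod_nonneg fun k _ => by by_cases h : b k <;> simp [h] <;> linarith

lemma bernWeight_sum (N : ℕ) (p : ℝ) : ∑ b : Fin N → Bool, bernWeight N p b = 1 := by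
  unfold bernWeight
  rw [← Fintype.prod_sum (fun (_ : Fin N) (j : Bool) => if j then p else 1 - p)]
  have h : ∀ k : Fin N, (∑ j : Bool, if j then p else 1 - p) = 1 := by
    intro k
    rw [Fintype.sum_bool]
    norm_num
  rw [Finset.prod_congr rfl fun k _ => h k, Finset.prod_const_one]

lemma half_pow_sum {ι : Type*} [Fintype ι] [DecidableEq ι] :
    ∑ _τ : ι → Bool, ((1:ℝ)/2) ^ Fintype.card ι = 1 := by
  rw [Finset.sum_const, Finset.card_univ, Fintype.card_fun, Fintype.card_bool, nsmul_eq_mul]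
  push_cast
  rw [← mul_pow]
  norm_num

set_option maxHeartbeats 2000000 in
lemma main_general {N : ℕ} (p : ℝ) (hp0 : 0 ≤ p) (hp1 : p ≤ 1)
    {α : Type*} [Fintype α] [DecidableEq α] (s : Finset α)
    {ι : Type*} [Fintype ι] [DecidableEq ι]
    (w : α → (Fin N → Bool) → ι → ℂ) (lam : ℝ) (hlam : 0 < lam) :
    bernSignProb N p (fun q : (Fin N → Bool) × (ι → Bool) =>
        ∃ t₀ ∉ s, ‖∑ t, w t₀ q.1 t * (if q.2 t then (1:ℂ) else -1)‖ ≥ 1) ≤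
      (sᶜ.card : ℝ) * (2 * Real.exp (-(1 / (2 * lam ^ 2)))) +
        bernProb N p (fun b => ∃ t₀ ∉ s, vecNorm (w t₀ b) ≥ lam) := by
  classical
  unfold bernSignProb bernProb vecNorm
  simp only [Set.indicator_apply, Set.mem_setOf_eq]
  have hWnn : ∀ b : Fin N → Bool, (0:ℝ) ≤ bernWeight N p b * ((1:ℝ)/2) ^ Fintype.card ι :=
    fun b => mul_nonneg (bernWeight_nonneg hp0 hp1 b) (by positivity)
  have hpt : ∀ q : (Fin N → Bool) × (ι → Bool),
      (if (∃ t₀ ∉ s, ‖∑ t, w t₀ q.1 t * (if q.2 t then (1:ℂ) else -1)‖ ≥ 1)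
        then bernWeight N p q.1 * (1/2:ℝ) ^ Fintype.card ι else 0)
      ≤ (∑ t₀ ∈ sᶜ, if (‖∑ t, w t₀ q.1 t * (if q.2 t then (1:ℂ) else -1)‖ ≥ 1
            ∧ Real.sqrt (∑ t, ‖w t₀ q.1 t‖ ^ 2) < lam)
          then bernWeight N p q.1 * (1/2:ℝ) ^ Fintype.card ι else 0)
        + (if (∃ t₀ ∉ s, Real.sqrt (∑ t, ‖w t₀ q.1 t‖ ^ 2) ≥ lam)
          then bernWeight N p q.1 * (1/2:ℝ) ^ Fintype.card ι else 0) := by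
    intro q
    have hsum_nn : (0:ℝ) ≤ ∑ t₀ ∈ sᶜ,
        (if (‖∑ t, w t₀ q.1 t * (if q.2 t then (1:ℂ) else -1)‖ ≥ 1
            ∧ Real.sqrt (∑ t, ‖w t₀ q.1 t‖ ^ 2) < lam)
          then bernWeight N p q.1 * (1/2:ℝ) ^ Fintype.card ι else 0) :=
      Finset.sum_nonneg fun t₀ _ => ite_nonneg_aux (hWnn q.1) _
    have hbad_nn : (0:ℝ) ≤ (if (∃ t₀ ∉ s, Real.sqrt (∑ t, ‖w t₀ q.1 t‖ ^ 2) ≥ lam)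
          then bernWeight N p q.1 * (1/2:ℝ) ^ Fintype.card ι else 0) :=
      ite_nonneg_aux (hWnn q.1) _
    by_cases hE : ∃ t₀ ∉ s, ‖∑ t, w t₀ q.1 t * (if q.2 t then (1:ℂ) else -1)‖ ≥ 1
    · rw [if_pos hE]
      obtain ⟨t₀, ht₀, habs⟩ := hE
      by_cases hv : Real.sqrt (∑ t, ‖w t₀ q.1 t‖ ^ 2) < lam
      · have hmem : t₀ ∈ sᶜ := Finset.mem_compl.mpr ht₀
        have hle : bernWeight N p q.1 * (1/2:ℝ) ^ Fintype.card ι ≤ ∑ t₀ ∈ sᶜ,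
            (if (‖∑ t, w t₀ q.1 t * (if q.2 t then (1:ℂ) else -1)‖ ≥ 1
                ∧ Real.sqrt (∑ t, ‖w t₀ q.1 t‖ ^ 2) < lam)
              then bernWeight N p q.1 * (1/2:ℝ) ^ Fintype.card ι else 0) := by
          have h1 := Finset.single_le_sum (f := fun t₀' =>
            if (‖∑ t, w t₀' q.1 t * (if q.2 t then (1:ℂ) else -1)‖ ≥ 1
                ∧ Real.sqrt (∑ t, ‖w t₀' q.1 t‖ ^ 2) < lam)
              then bernWeight N p q.1 * (1/2:ℝ) ^ Fintype.card ι else 0)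
            (fun t₀' _ => ite_nonneg_aux (hWnn q.1) _) hmem
          rwa [if_pos ⟨habs, hv⟩] at h1
        linarith
      · have hBad : ∃ t₀ ∉ s, Real.sqrt (∑ t, ‖w t₀ q.1 t‖ ^ 2) ≥ lam :=
          ⟨t₀, ht₀, not_lt.mp hv⟩
        rw [if_pos hBad]
        linarith
    · rw [if_neg hE]
      linarith
  have step := Finset.sum_le_sum (fun q (_ : q ∈ Finset.univ) => hpt q)
  refine le_trans step ?_
  rw [Finset.sum_add_distrib]
  have hcomm : (∑ q : (Fin N → Bool) × (ι → Bool), ∑ t₀ ∈ sᶜ,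
      (if (‖∑ t, w t₀ q.1 t * (if q.2 t then (1:ℂ) else -1)‖ ≥ 1
          ∧ Real.sqrt (∑ t, ‖w t₀ q.1 t‖ ^ 2) < lam)
        then bernWeight N p q.1 * (1/2:ℝ) ^ Fintype.card ι else 0))
      = ∑ t₀ ∈ sᶜ, ∑ q : (Fin N → Bool) × (ι → Bool),
      (if (‖∑ t, w t₀ q.1 t * (if q.2 t then (1:ℂ) else -1)‖ ≥ 1
          ∧ Real.sqrt (∑ t, ‖w t₀ q.1 t‖ ^ 2) < lam)
        then bernWeight N p q.1 * (1/2:ℝ) ^ Fintype.card ι else 0) := Finset.sum_comm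
  rw [hcomm]
  have hper : ∀ t₀ ∈ sᶜ, (∑ q : (Fin N → Bool) × (ι → Bool),
      (if (‖∑ t, w t₀ q.1 t * (if q.2 t then (1:ℂ) else -1)‖ ≥ 1
          ∧ Real.sqrt (∑ t, ‖w t₀ q.1 t‖ ^ 2) < lam)
        then bernWeight N p q.1 * (1/2:ℝ) ^ Fintype.card ι else 0))
      ≤ 2 * Real.exp (-(1 / (2 * lam ^ 2))) := by
    intro t₀ _
    rw [Fintype.sum_prod_type]
    have hb : ∀ bb : Fin N → Bool, (∑ τ : ι → Bool,
        if (‖∑ t, w t₀ bb t * (if τ t then (1:ℂ) else -1)‖ ≥ 1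
            ∧ Real.sqrt (∑ t, ‖w t₀ bb t‖ ^ 2) < lam)
          then bernWeight N p bb * (1/2:ℝ) ^ Fintype.card ι else 0)
        ≤ bernWeight N p bb * (2 * Real.exp (-(1 / (2 * lam ^ 2)))) := by
      intro bb
      by_cases hv : Real.sqrt (∑ t, ‖w t₀ bb t‖ ^ 2) < lam
      · have he : ∀ τ : ι → Bool,
            (if (‖∑ t, w t₀ bb t * (if τ t then (1:ℂ) else -1)‖ ≥ 1
                ∧ Real.sqrt (∑ t, ‖w t₀ bb t‖ ^ 2) < lam)
              then bernWeight N p bb * (1/2:ℝ) ^ Fintype.card ι else 0)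
            = bernWeight N p bb * ((1/2:ℝ) ^ Fintype.card ι *
              (if ‖∑ t, w t₀ bb t * (if τ t then (1:ℂ) else -1)‖ ≥ 1
                then (1:ℝ) else 0)) := by
          intro τ
          by_cases ha : ‖∑ t, w t₀ bb t * (if τ t then (1:ℂ) else -1)‖ ≥ 1
          · rw [if_pos (⟨ha, hv⟩ : _ ∧ _), if_pos ha, mul_one]
          · rw [if_neg (fun hh => ha hh.1), if_neg ha, mul_zero, mul_zero]
        calc (∑ τ : ι → Bool,
              if (‖∑ t, w t₀ bb t * (if τ t then (1:ℂ) else -1)‖ ≥ 1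
                  ∧ Real.sqrt (∑ t, ‖w t₀ bb t‖ ^ 2) < lam)
                then bernWeight N p bb * (1/2:ℝ) ^ Fintype.card ι else 0)
            = ∑ τ : ι → Bool, bernWeight N p bb * ((1/2:ℝ) ^ Fintype.card ι *
                (if ‖∑ t, w t₀ bb t * (if τ t then (1:ℂ) else -1)‖ ≥ 1
                  then (1:ℝ) else 0)) := Finset.sum_congr rfl fun τ _ => he τ
          _ = bernWeight N p bb * ∑ τ : ι → Bool, ((1/2:ℝ) ^ Fintype.card ι *
                (if ‖∑ t, w t₀ bb t * (if τ t then (1:ℂ) else -1)‖ ≥ 1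
                  then (1:ℝ) else 0)) := (Finset.mul_sum _ _ _).symm
          _ ≤ bernWeight N p bb * (2 * Real.exp (-(1 / (2 * lam ^ 2)))) :=
              mul_le_mul_of_nonneg_left
                (hoeffding_complex (w t₀ bb) lam hlam hv.le) (bernWeight_nonneg hp0 hp1 bb)
      · have hz : (∑ τ : ι → Bool,
            if (‖∑ t, w t₀ bb t * (if τ t then (1:ℂ) else -1)‖ ≥ 1
                ∧ Real.sqrt (∑ t, ‖w t₀ bb t‖ ^ 2) < lam)
              then bernWeight N p bb * (1/2:ℝ) ^ Fintype.card ι else 0) = 0 :=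
          Finset.sum_eq_zero fun τ _ => if_neg (fun hh => hv hh.2)
        rw [hz]
        exact mul_nonneg (bernWeight_nonneg hp0 hp1 bb) (by positivity)
    calc (∑ bb : Fin N → Bool, ∑ τ : ι → Bool,
          if (‖∑ t, w t₀ bb t * (if τ t then (1:ℂ) else -1)‖ ≥ 1
              ∧ Real.sqrt (∑ t, ‖w t₀ bb t‖ ^ 2) < lam)
            then bernWeight N p bb * (1/2:ℝ) ^ Fintype.card ι else 0)
        ≤ ∑ bb : Fin N → Bool, bernWeight N p bb * (2 * Real.exp (-(1 / (2 * lam ^ 2)))) :=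
          Finset.sum_le_sum fun bb _ => hb bb
      _ = (∑ bb : Fin N → Bool, bernWeight N p bb) * (2 * Real.exp (-(1 / (2 * lam ^ 2)))) := by
          rw [← Finset.sum_mul]
      _ = 2 * Real.exp (-(1 / (2 * lam ^ 2))) := by rw [bernWeight_sum]; ring
  have hA : (∑ t₀ ∈ sᶜ, ∑ q : (Fin N → Bool) × (ι → Bool),
      (if (‖∑ t, w t₀ q.1 t * (if q.2 t then (1:ℂ) else -1)‖ ≥ 1
          ∧ Real.sqrt (∑ t, ‖w t₀ q.1 t‖ ^ 2) < lam)
        then bernWeight N p q.1 * (1/2:ℝ) ^ Fintype.card ι else 0))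
      ≤ (sᶜ.card : ℝ) * (2 * Real.exp (-(1 / (2 * lam ^ 2)))) := by
    have h := Finset.sum_le_card_nsmul sᶜ _ _ hper
    rwa [nsmul_eq_mul] at h
  have hB : (∑ q : (Fin N → Bool) × (ι → Bool),
      (if (∃ t₀ ∉ s, Real.sqrt (∑ t, ‖w t₀ q.1 t‖ ^ 2) ≥ lam)
        then bernWeight N p q.1 * (1/2:ℝ) ^ Fintype.card ι else 0))
      = ∑ b : Fin N → Bool,
        (if (∃ t₀ ∉ s, Real.sqrt (∑ t, ‖w t₀ b t‖ ^ 2) ≥ lam)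
          then bernWeight N p b else 0) := by
    rw [Fintype.sum_prod_type]
    apply Finset.sum_congr rfl
    intro b _
    by_cases hBad : ∃ t₀ ∉ s, Real.sqrt (∑ t, ‖w t₀ b t‖ ^ 2) ≥ lam
    · rw [if_pos hBad]
      calc (∑ τ : ι → Bool,
            if (∃ t₀ ∉ s, Real.sqrt (∑ t, ‖w t₀ b t‖ ^ 2) ≥ lam)
              then bernWeight N p b * (1/2:ℝ) ^ Fintype.card ι else 0)
          = ∑ _τ : ι → Bool, bernWeight N p b * (1/2:ℝ) ^ Fintype.card ι :=
            Finset.sum_congr rfl fun τ _ => if_pos hBad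
        _ = bernWeight N p b * ∑ _τ : ι → Bool, ((1:ℝ)/2) ^ Fintype.card ι :=
            (Finset.mul_sum _ _ _).symm
        _ = bernWeight N p b := by rw [half_pow_sum, mul_one]
    · rw [if_neg hBad]
      exact Finset.sum_eq_zero fun τ _ => if_neg hBad
  rw [hB]
  exact add_le_add hA le_rfl

end AuxProof


/-- Hoeffding-type step: for all `λ > 0`,
`P(sup_{t ∈ T^c} |π(t)| ≥ 1) ≤ 2(n₁+n₂)e^{−1/(2λ²)} + P(sup_{t₀ ∈ T^c} ‖w⁰‖ ≥ λ)`,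
where `π(t₀) = ⟨w⁰, τ⟩` for i.i.d. uniform signs `τ` independent of the Bernoulli samples. -/
theorem pi_sup_bound_via_wZero {N n₁ n₂ m : ℕ}
    (hN : 0 < N) (hn₁ : 0 < n₁) (hn₂ : 0 < n₂) (hm : 0 < m) (hmN : m ≤ N)
    (Φ : Matrix (Fin N) (Fin n₁) ℂ) (Ψ : Matrix (Fin N) (Fin n₂) ℂ)
    (hΦ : Φᴴ * Φ = (N : ℂ) • 1) (hΨ : Ψᴴ * Ψ = (N : ℂ) • 1)
    (T₁ : Finset (Fin n₁)) (T₂ : Finset (Fin n₂))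
    (lam : ℝ) (hlam : 0 < lam) :
    bernSignProb N ((m : ℝ) / N)
        (fun q : (Fin N → Bool) × ((↥T₁ ⊕ ↥T₂) → Bool) =>
          ∃ t₀ ∉ T₁.disjSum T₂,
            ‖∑ t, wZero Φ Ψ T₁ T₂ t₀ q.1 t *
              (if q.2 t then (1 : ℂ) else -1)‖ ≥ 1) ≤
      2 * ((n₁ : ℝ) + n₂) * Real.exp (-(1 / (2 * lam ^ 2))) +
        bernProb N ((m : ℝ) / N)
          (fun b => ∃ t₀ ∉ T₁.disjSum T₂, vecNorm (wZero Φ Ψ T₁ T₂ t₀ b) ≥ lam) := by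
  have hp0 : (0:ℝ) ≤ (m:ℝ)/N := by positivity
  have hp1 : (m:ℝ)/N ≤ 1 := by
    rw [div_le_one (by exact_mod_cast hN : (0:ℝ) < N)]
    exact_mod_cast hmN
  have h := main_general ((m:ℝ)/N) hp0 hp1 (T₁.disjSum T₂)
    (fun t₀ b => wZero Φ Ψ T₁ T₂ t₀ b) lam hlam
  refine le_trans h (add_le_add ?_ le_rfl)
  have hcard : (((T₁.disjSum T₂)ᶜ).card : ℝ) ≤ (n₁ : ℝ) + n₂ := by
    have h1 := Finset.card_le_univ ((T₁.disjSum T₂)ᶜ)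
    have h2 : Fintype.card (Fin n₁ ⊕ Fin n₂) = n₁ + n₂ := by simp
    have h3 : (((T₁.disjSum T₂)ᶜ).card : ℝ) ≤ (Fintype.card (Fin n₁ ⊕ Fin n₂) : ℝ) := by
      exact_mod_cast h1
    rw [h2] at h3
    push_cast at h3
    linarith
  have hexp : (0:ℝ) < Real.exp (-(1 / (2 * lam ^ 2))) := Real.exp_pos _
  nlinarith [hexp, hcard]
end
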